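/- Let N be an n×n complex matrix whose entrywise complex conjugate conj(N) satisfies N·conj(N) = I (the identity matrix). Then Σ_{i,j} |N_{ij}|² − n = Σ_{i<j} |N_{ij} − N_{ji}|²; in particular Σ_{i,j} |N_{ij}|² ≥ n, with equality if and only if N is symmetric. -/

import Mathlib

open Matrix

theorem sum_abs_sq_of_conj_inv {n : ℕ} (N : Matrix (Fin n) (Fin n) ℂ)
    (h : N * N.map (starRingEnd ℂ) = 1) :
    ((∑ i, ∑ j, ‖N i j‖ ^ 2) - (n : ℝ) =
      ∑ i, ∑ j, if i < j then ‖N i j - N j i‖ ^ 2 else 0) ∧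
    ((n : ℝ) ≤ ∑ i, ∑ j, ‖N i j‖ ^ 2) ∧
    ((∑ i, ∑ j, ‖N i j‖ ^ 2) = (n : ℝ) ↔ N.IsSymm) := by
  -- diagonal entries of the product are 1
  have h1 : ∀ i, ∑ k, N i k * (starRingEnd ℂ) (N k i) = 1 := by
    intro i
    have := congrFun (congrFun h i) i
    simpa [Matrix.mul_apply, Matrix.one_apply, Matrix.map_apply] using this
  have h2 : ∑ i : Fin n, ∑ k, (N i k * (starRingEnd ℂ) (N k i)).re = (n : ℝ) := by
    have : ∑ i : Fin n, ∑ k, (N i k * (starRingEnd ℂ) (N k i)) = (n : ℂ) := by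
      simp [h1]
    calc ∑ i : Fin n, ∑ k, (N i k * (starRingEnd ℂ) (N k i)).re
        = (∑ i : Fin n, ∑ k, (N i k * (starRingEnd ℂ) (N k i))).re := by
          simp [Complex.re_sum]
      _ = (n : ℝ) := by rw [this]; simp
  set S : ℝ := ∑ i, ∑ j, ‖N i j‖ ^ 2 with hS
  set L : ℝ := ∑ i, ∑ j, if i < j then ‖N i j - N j i‖ ^ 2 else 0 with hL
  -- symmetric function
  have gsymm : ∀ i j : Fin n, ‖N i j - N j i‖ ^ 2 = ‖N j i - N i j‖ ^ 2 := by
    intro i j; rw [norm_sub_rev]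
  have hT : ∑ i, ∑ j, ‖N i j - N j i‖ ^ 2 = 2 * S - 2 * n := by
    have expand : ∀ i j : Fin n, ‖N i j - N j i‖ ^ 2 =
        ‖N i j‖ ^ 2 + ‖N j i‖ ^ 2
          - 2 * (N i j * (starRingEnd ℂ) (N j i)).re := by
      intro i j
      simp only [Complex.sq_norm]
      exact Complex.normSq_sub _ _
    calc ∑ i, ∑ j, ‖N i j - N j i‖ ^ 2
        = ∑ i, ∑ j, (‖N i j‖ ^ 2 + ‖N j i‖ ^ 2
            - 2 * (N i j * (starRingEnd ℂ) (N j i)).re) := by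
          simp only [expand]
      _ = (∑ i, ∑ j, ‖N i j‖ ^ 2) + (∑ i, ∑ j, ‖N j i‖ ^ 2)
            - 2 * ∑ i, ∑ j, (N i j * (starRingEnd ℂ) (N j i)).re := by
          simp only [Finset.sum_sub_distrib, Finset.sum_add_distrib, Finset.mul_sum]
      _ = 2 * S - 2 * n := by
          rw [Finset.sum_comm (f := fun i j => ‖N j i‖ ^ 2), h2, ← hS]
          ring
  have hLhalf : 2 * L = ∑ i, ∑ j, ‖N i j - N j i‖ ^ 2 := by
    have swap : (∑ i, ∑ j, if j < i then ‖N i j - N j i‖ ^ 2 else 0) = L := by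
      rw [hL, Finset.sum_comm]
      refine Finset.sum_congr rfl fun i _ => Finset.sum_congr rfl fun j _ => ?_
      rw [gsymm]
    calc 2 * L = L + (∑ i, ∑ j, if j < i then ‖N i j - N j i‖ ^ 2 else 0) := by
          rw [swap]; ring
      _ = ∑ i, ∑ j, ((if i < j then ‖N i j - N j i‖ ^ 2 else 0)
            + (if j < i then ‖N i j - N j i‖ ^ 2 else 0)) := by
          rw [hL]; simp [Finset.sum_add_distrib]
      _ = ∑ i, ∑ j, ‖N i j - N j i‖ ^ 2 := by
          refine Finset.sum_congr rfl fun i _ => Finset.sum_congr rfl fun j _ => ?_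
          rcases lt_trichotomy i j with hij | hij | hij
          · simp [hij, not_lt_of_gt hij]
          · subst hij; simp
          · simp [hij, not_lt_of_gt hij]
  have key : S - n = L := by
    have : 2 * L = 2 * S - 2 * n := by rw [hLhalf, hT]
    linarith
  have hLnonneg : 0 ≤ L := by
    rw [hL]
    refine Finset.sum_nonneg fun i _ => Finset.sum_nonneg fun j _ => ?_
    positivity
  refine ⟨key, by linarith, ?_⟩
  constructor
  · intro hSn
    have hL0 : L = 0 := by linarith
    have hall : ∀ i j : Fin n, i < j → N i j = N j i := by
      intro i j hij
      rw [hL] at hL0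
      have h1' := (Finset.sum_eq_zero_iff_of_nonneg (fun i _ =>
        Finset.sum_nonneg fun j _ => by positivity)).mp hL0 i (Finset.mem_univ i)
      have h2' := (Finset.sum_eq_zero_iff_of_nonneg (fun j _ => by positivity)).mp
        h1' j (Finset.mem_univ j)
      rw [if_pos hij] at h2'
      have h3 : ‖N i j - N j i‖ = 0 :=
        pow_eq_zero_iff (n := 2) (by norm_num) |>.mp h2'
      exact sub_eq_zero.mp (norm_eq_zero.mp h3)
    unfold Matrix.IsSymm
    ext i j
    rcases lt_trichotomy i j with hij | hij | hij
    · rw [Matrix.transpose_apply, hall i j hij]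
    · subst hij; rfl
    · rw [Matrix.transpose_apply, ← hall j i hij]
  · intro hsym
    have : L = 0 := by
      rw [hL]
      refine Finset.sum_eq_zero fun i _ => Finset.sum_eq_zero fun j _ => ?_
      have : N i j = N j i := by
        have := congrFun (congrFun hsym.eq j) i
        simpa [Matrix.transpose_apply] using this
      simp [this]
    linarith
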